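/- Let (X,𝒳,μ) be a σ-finite measure space, R > 0, and let f : X × ℝ → ℝ be measurable (with respect to the product of 𝒳 and the Borel σ-algebra, Lebesgue measure on ℝ) such that: (i) f(x,ξ) ∈ {−1,0,1} for a.e. (x,ξ); (ii) f(x,ξ) = 0 for a.e. (x,ξ) with |ξ| > R; (iii) for a.e. (x,ξ,η) ∈ X × ℝ × ℝ with ξ < η < 0 or 0 < ξ < η, one has f(x,ξ) ≥ f(x,η); (iv) for a.e. (x,ξ,η) with ξ < η, one has f(x,ξ) − f(x,η) + 1 ≥ 0. Then, setting u(x) := ∫_ℝ f(x,ξ) dξ, the function u is measurable and for μ-a.e. x ∈ X one has f(x,ξ) = 1_{ξ < u(x)} − 1_{ξ < 0} for Lebesgue-a.e. ξ ∈ ℝ. -/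

import Mathlib

open MeasureTheory Set

lemma chi_integral (c : ℝ) :
    ∫ ξ : ℝ, ((if ξ < c then (1:ℝ) else 0) - (if ξ < 0 then 1 else 0)) = c := by
  rcases le_or_gt 0 c with hc | hc
  · have heq : (fun ξ : ℝ => ((if ξ < c then (1:ℝ) else 0) - (if ξ < 0 then 1 else 0)))
        = (Ico (0:ℝ) c).indicator (fun _ => (1:ℝ)) := by
      funext ξ
      simp only [indicator, mem_Ico]
      rcases lt_or_ge ξ 0 with h | h
      · rw [if_pos (lt_of_lt_of_le h hc), if_pos h,
          if_neg (fun hh : 0 ≤ ξ ∧ ξ < c => absurd hh.1 (not_le.mpr h))]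
        ring
      · rcases lt_or_ge ξ c with h' | h'
        · rw [if_pos h', if_neg (not_lt.mpr h), if_pos ⟨h, h'⟩]; ring
        · rw [if_neg (not_lt.mpr h'), if_neg (not_lt.mpr h),
            if_neg (fun hh : 0 ≤ ξ ∧ ξ < c => absurd hh.2 (not_lt.mpr h'))]
          ring
    rw [heq, integral_indicator_const _ measurableSet_Ico]
    simp [Real.volume_Ico, ENNReal.toReal_ofReal hc, hc]
  · have heq : (fun ξ : ℝ => ((if ξ < c then (1:ℝ) else 0) - (if ξ < 0 then 1 else 0)))
        = (Ico c 0).indicator (fun _ => (-1:ℝ)) := by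
      funext ξ
      simp only [indicator, mem_Ico]
      rcases lt_or_ge ξ c with h | h
      · rw [if_pos h, if_pos (lt_trans h hc),
          if_neg (fun hh : c ≤ ξ ∧ ξ < 0 => absurd hh.1 (not_le.mpr h))]
        ring
      · rcases lt_or_ge ξ 0 with h' | h'
        · rw [if_neg (not_lt.mpr h), if_pos h', if_pos ⟨h, h'⟩]; ring
        · rw [if_neg (not_lt.mpr (le_trans (le_of_lt hc) h')), if_neg (not_lt.mpr h'),
            if_neg (fun hh : c ≤ ξ ∧ ξ < 0 => absurd hh.2 (not_lt.mpr h'))]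
          ring
    rw [heq, integral_indicator_const _ measurableSet_Ico]
    simp only [measureReal_def, Real.volume_Ico, smul_eq_mul]
    rw [ENNReal.toReal_ofReal (by linarith)]
    ring

lemma interval_of_mono (S : Set ℝ) (hS : MeasurableSet S) (hsub : S ⊆ Set.Ioi 0)
    (hfin : volume S ≠ ⊤)
    (hmono : ∀ᵐ p : ℝ × ℝ ∂(volume : Measure (ℝ × ℝ)),
      0 < p.1 → p.1 < p.2 → p.2 ∈ S → p.1 ∈ S) :
    S =ᵐ[volume] Set.Ioo 0 (volume S).toReal := by
  set a := (volume S).toReal with ha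
  have ha0 : 0 ≤ a := ENNReal.toReal_nonneg
  rw [Measure.volume_eq_prod] at hmono
  -- swap to section in the second variable
  have hswap : ∀ᵐ p : ℝ × ℝ ∂((volume : Measure ℝ).prod volume),
      0 < p.2 → p.2 < p.1 → p.1 ∈ S → p.2 ∈ S :=
    Measure.measurePreserving_swap.quasiMeasurePreserving.ae hmono
  have hF := Measure.ae_ae_of_ae_prod hswap
  -- a.e. η ∈ S, η ≤ a
  have key : ∀ᵐ η : ℝ ∂volume, η ∈ S → η ∈ Set.Ioc 0 a := by
    filter_upwards [hF] with η hη hmem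
    refine ⟨hsub hmem, ?_⟩
    have h1 : ∀ᵐ ξ : ℝ ∂volume, ξ ∈ Set.Ioo 0 η → ξ ∈ S := by
      filter_upwards [hη] with ξ h hξ
      exact h hξ.1 hξ.2 hmem
    have h1' : volume {ξ : ℝ | ¬(ξ ∈ Set.Ioo 0 η → ξ ∈ S)} = 0 := ae_iff.mp h1
    have h2 : volume (Set.Ioo 0 η \ S) = 0 :=
      measure_mono_null (fun ξ hξ => fun hh => hξ.2 (hh hξ.1)) h1'
    have h3 : ENNReal.ofReal η ≤ volume S := by
      calc ENNReal.ofReal η = volume (Set.Ioo 0 η) := by simp [Real.volume_Ioo]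
        _ ≤ volume (S ∪ (Set.Ioo 0 η \ S)) :=
          measure_mono (fun ξ hξ => by by_cases h : ξ ∈ S; exacts [Or.inl h, Or.inr ⟨hξ, h⟩])
        _ ≤ volume S + volume (Set.Ioo 0 η \ S) := measure_union_le _ _
        _ = volume S := by rw [h2, add_zero]
    have := ENNReal.toReal_mono hfin h3
    rwa [ENNReal.toReal_ofReal (le_of_lt (hsub hmem))] at this
  have key' : volume {η : ℝ | ¬(η ∈ S → η ∈ Set.Ioc 0 a)} = 0 := ae_iff.mp key
  have hd1 : volume (S \ Set.Ioc 0 a) = 0 :=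
    measure_mono_null (fun ξ hξ => fun hh => hξ.2 (hh hξ.1)) key'
  have hSa : volume S = ENNReal.ofReal a := (ENNReal.ofReal_toReal hfin).symm
  have hinter : volume (S ∩ Set.Ioc 0 a) = ENNReal.ofReal a := by
    refine le_antisymm ?_ ?_
    · rw [← hSa]; exact measure_mono inter_subset_left
    · rw [← hSa]
      calc volume S ≤ volume ((S ∩ Set.Ioc 0 a) ∪ (S \ Set.Ioc 0 a)) :=
            measure_mono (fun ξ hξ => by
              by_cases h : ξ ∈ Set.Ioc 0 a; exacts [Or.inl ⟨hξ, h⟩, Or.inr ⟨hξ, h⟩])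
        _ ≤ volume (S ∩ Set.Ioc 0 a) + volume (S \ Set.Ioc 0 a) := measure_union_le _ _
        _ = volume (S ∩ Set.Ioc 0 a) := by rw [hd1, add_zero]
  have hd2 : volume (Set.Ioc 0 a \ S) = 0 := by
    have : Set.Ioc 0 a \ S = Set.Ioc 0 a \ (S ∩ Set.Ioc 0 a) := by
      ext ξ; simp only [mem_diff, mem_inter_iff]; tauto
    rw [this, measure_diff inter_subset_right (hS.inter measurableSet_Ioc).nullMeasurableSet
      (by rw [hinter]; exact ENNReal.ofReal_ne_top), hinter, Real.volume_Ioc, sub_zero,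
      tsub_self]
  rw [Filter.eventuallyEq_set]
  have hnull : volume ((S \ Set.Ioc 0 a) ∪ (Set.Ioc 0 a \ S) ∪ {a}) = 0 :=
    measure_union_null (measure_union_null hd1 hd2) (measure_singleton a)
  have hae : ∀ᵐ ξ : ℝ ∂volume, ξ ∉ ((S \ Set.Ioc 0 a) ∪ (Set.Ioc 0 a \ S) ∪ {a}) :=
    measure_eq_zero_iff_ae_notMem.mp hnull
  filter_upwards [hae] with ξ hξ
  simp only [mem_union, mem_singleton_iff, not_or] at hξ
  obtain ⟨⟨n1, n2⟩, n3⟩ := hξ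
  constructor
  · intro hmem
    have hIoc : ξ ∈ Set.Ioc 0 a := by
      by_contra h; exact n1 ⟨hmem, h⟩
    exact ⟨hIoc.1, lt_of_le_of_ne hIoc.2 n3⟩
  · intro hmem
    have : ξ ∈ Set.Ioc 0 a := ⟨hmem.1, le_of_lt hmem.2⟩
    by_contra h; exact n2 ⟨this, h⟩

lemma oneD (R : ℝ) (hR : 0 < R) (g : ℝ → ℝ) (hg : Measurable g)
    (h1 : ∀ᵐ ξ : ℝ ∂volume, g ξ = -1 ∨ g ξ = 0 ∨ g ξ = 1)
    (h2 : ∀ᵐ ξ : ℝ ∂volume, R < |ξ| → g ξ = 0)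
    (h3 : ∀ᵐ p : ℝ × ℝ ∂(volume : Measure (ℝ × ℝ)),
      ((p.1 < p.2 ∧ p.2 < 0) ∨ (0 < p.1 ∧ p.1 < p.2)) → g p.2 ≤ g p.1)
    (h4 : ∀ᵐ p : ℝ × ℝ ∂(volume : Measure (ℝ × ℝ)), p.1 < p.2 → 0 ≤ g p.1 - g p.2 + 1) :
    ∀ᵐ ξ : ℝ ∂volume, g ξ = (if ξ < ∫ η : ℝ, g η then (1:ℝ) else 0) - (if ξ < 0 then 1 else 0) := by
  rw [Measure.volume_eq_prod] at h3 h4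
  have hnegMP : MeasurePreserving (fun ξ : ℝ => -ξ) volume volume :=
    Measure.measurePreserving_neg volume
  have qf : Measure.QuasiMeasurePreserving (Prod.fst : ℝ × ℝ → ℝ)
      ((volume : Measure ℝ).prod volume) volume := Measure.quasiMeasurePreserving_fst
  have qs : Measure.QuasiMeasurePreserving (Prod.snd : ℝ × ℝ → ℝ)
      ((volume : Measure ℝ).prod volume) volume := Measure.quasiMeasurePreserving_snd
  have h1fst := qf.ae h1
  have h2snd := qs.ae h2
  have hzero : ∀ᵐ ξ : ℝ ∂volume, ξ ≠ 0 := by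
    have h0 : volume ({0} : Set ℝ) = 0 := measure_singleton 0
    have := measure_eq_zero_iff_ae_notMem.mp h0
    filter_upwards [this] with ξ h
    simpa using h
  -- a.e. sign on positive half line
  have hpos : ∀ᵐ ξ : ℝ ∂volume, 0 < ξ → 0 ≤ g ξ := by
    have hF := Measure.ae_ae_of_ae_prod (h3.and h2snd)
    filter_upwards [hF] with ξ hξ hpos0
    have hres : ∀ᵐ η ∂(volume.restrict (Set.Ioi (max ξ R))),
        ((((ξ, η).1 < (ξ, η).2 ∧ (ξ, η).2 < 0) ∨ (0 < (ξ, η).1 ∧ (ξ, η).1 < (ξ, η).2)) →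
          g (ξ, η).2 ≤ g (ξ, η).1) ∧ (R < |(ξ, η).2| → g (ξ, η).2 = 0) ∧ η ∈ Set.Ioi (max ξ R) :=
      ((ae_restrict_of_ae hξ).and (ae_restrict_mem measurableSet_Ioi)).mono
        (fun η hh => ⟨hh.1.1, hh.1.2, hh.2⟩)
    haveI : (ae (volume.restrict (Set.Ioi (max ξ R)))).NeBot := by
      rw [ae_neBot, Ne, Measure.restrict_eq_zero]
      simp [Real.volume_Ioi]
    obtain ⟨η, hc3, hc2, hη⟩ := hres.exists
    have hηR : R < η := lt_of_le_of_lt (le_max_right ξ R) hη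
    have hg0 : g η = 0 := hc2 (by rw [abs_of_pos (lt_trans hR hηR)]; exact hηR)
    have := hc3 (Or.inr ⟨hpos0, lt_of_le_of_lt (le_max_left ξ R) hη⟩)
    simp only at this
    linarith
  -- a.e. sign on negative half line
  have h3s : ∀ᵐ p : ℝ × ℝ ∂((volume : Measure ℝ).prod volume),
      ((p.2 < p.1 ∧ p.1 < 0) ∨ (0 < p.2 ∧ p.2 < p.1)) → g p.1 ≤ g p.2 :=
    Measure.measurePreserving_swap.quasiMeasurePreserving.ae h3
  have hneg : ∀ᵐ ξ : ℝ ∂volume, ξ < 0 → g ξ ≤ 0 := by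
    have hF := Measure.ae_ae_of_ae_prod (h3s.and h2snd)
    filter_upwards [hF] with ξ hξ hneg0
    have hres : ∀ᵐ η ∂(volume.restrict (Set.Iio (min ξ (-R)))),
        ((((ξ, η).2 < (ξ, η).1 ∧ (ξ, η).1 < 0) ∨ (0 < (ξ, η).2 ∧ (ξ, η).2 < (ξ, η).1)) →
          g (ξ, η).1 ≤ g (ξ, η).2) ∧ (R < |(ξ, η).2| → g (ξ, η).2 = 0) ∧ η ∈ Set.Iio (min ξ (-R)) :=
      ((ae_restrict_of_ae hξ).and (ae_restrict_mem measurableSet_Iio)).mono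
        (fun η hh => ⟨hh.1.1, hh.1.2, hh.2⟩)
    haveI : (ae (volume.restrict (Set.Iio (min ξ (-R))))).NeBot := by
      rw [ae_neBot, Ne, Measure.restrict_eq_zero]
      simp [Real.volume_Iio]
    obtain ⟨η, hc3, hc2, hη⟩ := hres.exists
    have hηR : η < -R := lt_of_lt_of_le hη (min_le_right ξ (-R))
    have hg0 : g η = 0 := hc2 (by rw [abs_of_neg (by linarith)]; linarith)
    have := hc3 (Or.inl ⟨lt_of_lt_of_le hη (min_le_left ξ (-R)), hneg0⟩)
    simp only at this
    linarith
    -- ae subset gives measure inequality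
  have measle : ∀ {S T : Set ℝ}, (∀ᵐ ξ : ℝ ∂volume, ξ ∈ S → ξ ∈ T) → volume S ≤ volume T := by
    intro S T h
    exact measure_mono_ae h
  -- the positive-side set
  set S1 : Set ℝ := {ξ : ℝ | 0 < ξ ∧ g ξ = 1} with hS1def
  have hS1m : MeasurableSet S1 := by
    have : S1 = Set.Ioi 0 ∩ g ⁻¹' {1} := by
      ext ξ; simp [hS1def, Set.mem_Ioi]
    rw [this]
    exact measurableSet_Ioi.inter (hg (measurableSet_singleton 1))
  have hfin1 : volume S1 ≠ ⊤ := by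
    have hsub1 : ∀ᵐ ξ : ℝ ∂volume, ξ ∈ S1 → ξ ∈ Set.Ioc 0 R := by
      filter_upwards [h2] with ξ hh hmem
      refine ⟨hmem.1, ?_⟩
      by_contra hc
      push_neg at hc
      have : g ξ = 0 := hh (by rw [abs_of_pos hmem.1]; exact hc)
      rw [hmem.2] at this; norm_num at this
    exact fun hcon => (by simp [Real.volume_Ioc] : volume (Set.Ioc (0:ℝ) R) ≠ ⊤)
      (top_le_iff.mp (hcon ▸ measle hsub1))
  have mono1 : ∀ᵐ p : ℝ × ℝ ∂(volume : Measure (ℝ × ℝ)),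
      0 < p.1 → p.1 < p.2 → p.2 ∈ S1 → p.1 ∈ S1 := by
    rw [Measure.volume_eq_prod]
    filter_upwards [h3, h1fst] with p hp hv hp1 hlt hmem
    have hle : g p.2 ≤ g p.1 := hp (Or.inr ⟨hp1, hlt⟩)
    rw [hmem.2] at hle
    refine ⟨hp1, ?_⟩
    rcases hv with h | h | h
    · exfalso; rw [h] at hle; norm_num at hle
    · exfalso; rw [h] at hle; norm_num at hle
    · exact h
  have hS1 := interval_of_mono S1 hS1m (fun ξ hξ => hξ.1) hfin1 mono1
  set a : ℝ := (volume S1).toReal with hadef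
  have ha0 : 0 ≤ a := ENNReal.toReal_nonneg
  -- the negative-side set, reflected
  set S2 : Set ℝ := {ξ : ℝ | 0 < ξ ∧ g (-ξ) = -1} with hS2def
  have hS2m : MeasurableSet S2 := by
    have : S2 = Set.Ioi 0 ∩ (fun ξ : ℝ => g (-ξ)) ⁻¹' {-1} := by
      ext ξ; simp [hS2def, Set.mem_Ioi]
    rw [this]
    exact measurableSet_Ioi.inter ((hg.comp measurable_neg) (measurableSet_singleton (-1)))
  have h2neg : ∀ᵐ ξ : ℝ ∂volume, R < |(-ξ)| → g (-ξ) = 0 :=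
    hnegMP.quasiMeasurePreserving.ae h2
  have hfin2 : volume S2 ≠ ⊤ := by
    have hsub2 : ∀ᵐ ξ : ℝ ∂volume, ξ ∈ S2 → ξ ∈ Set.Ioc 0 R := by
      filter_upwards [h2neg] with ξ hh hmem
      refine ⟨hmem.1, ?_⟩
      by_contra hc
      push_neg at hc
      have : g (-ξ) = 0 := hh (by rw [abs_neg, abs_of_pos hmem.1]; exact hc)
      rw [hmem.2] at this; norm_num at this
    exact fun hcon => (by simp [Real.volume_Ioc] : volume (Set.Ioc (0:ℝ) R) ≠ ⊤)
      (top_le_iff.mp (hcon ▸ measle hsub2))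
  have hE : MeasurePreserving (fun p : ℝ × ℝ => (-p.2, -p.1))
      ((volume : Measure ℝ).prod volume) ((volume : Measure ℝ).prod volume) := by
    have := (hnegMP.prod hnegMP).comp
      (Measure.measurePreserving_swap (μ := (volume : Measure ℝ)) (ν := (volume : Measure ℝ)))
    exact this
  have h3E := hE.quasiMeasurePreserving.ae h3
  have h1negfst := (hnegMP.quasiMeasurePreserving.comp qf).ae h1
  have mono2 : ∀ᵐ p : ℝ × ℝ ∂(volume : Measure (ℝ × ℝ)),
      0 < p.1 → p.1 < p.2 → p.2 ∈ S2 → p.1 ∈ S2 := by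
    rw [Measure.volume_eq_prod]
    filter_upwards [h3E, h1negfst] with p hp hv hp1 hlt hmem
    simp only [Function.comp] at hp hv
    have hle : g (-p.1) ≤ g (-p.2) := hp (Or.inl ⟨by simpa using hlt, by simpa using hp1⟩)
    rw [hmem.2] at hle
    refine ⟨hp1, ?_⟩
    rcases hv with h | h | h
    · exact h
    · exfalso; rw [h] at hle; norm_num at hle
    · exfalso; rw [h] at hle; norm_num at hle
  have hS2 := interval_of_mono S2 hS2m (fun ξ hξ => hξ.1) hfin2 mono2
  set b : ℝ := (volume S2).toReal with hbdef
  have hb0 : 0 ≤ b := ENNReal.toReal_nonneg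
  -- membership characterizations
  have hS1mem : ∀ᵐ ξ : ℝ ∂volume, ξ ∈ S1 ↔ ξ ∈ Set.Ioo 0 a := Filter.eventuallyEq_set.mp hS1
  have hS2memNeg : ∀ᵐ ξ : ℝ ∂volume, -ξ ∈ S2 ↔ -ξ ∈ Set.Ioo 0 b :=
    hnegMP.quasiMeasurePreserving.ae (Filter.eventuallyEq_set.mp hS2)
  have hne : ∀ c : ℝ, ∀ᵐ ξ : ℝ ∂volume, ξ ≠ c := by
    intro c
    have h0 : volume ({c} : Set ℝ) = 0 := measure_singleton c
    filter_upwards [measure_eq_zero_iff_ae_notMem.mp h0] with ξ h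
    simpa using h
  -- finishing step: once we know g is a.e. a kinetic function with some value c
  have hfinish : ∀ c : ℝ, (∀ᵐ ξ : ℝ ∂volume,
      g ξ = (if ξ < c then (1:ℝ) else 0) - (if ξ < 0 then 1 else 0)) →
      ∀ᵐ ξ : ℝ ∂volume,
        g ξ = (if ξ < ∫ η : ℝ, g η then (1:ℝ) else 0) - (if ξ < 0 then 1 else 0) := by
    intro c hgc
    have hint : ∫ η : ℝ, g η = c := by
      rw [integral_congr_ae hgc]; exact chi_integral c
    filter_upwards [hgc] with ξ h
    rw [hint]; exact h
  rcases eq_or_ne (volume S2) 0 with hb2 | hb2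
  · -- no negative part : c = a
    have hnm : ∀ᵐ ξ : ℝ ∂volume, -ξ ∉ S2 :=
      hnegMP.quasiMeasurePreserving.ae (measure_eq_zero_iff_ae_notMem.mp hb2)
    apply hfinish a
    filter_upwards [hzero, hpos, hneg, h1, hS1mem, hnm] with ξ hξ0 hpos' hneg' hv hmem hnm'
    rcases lt_trichotomy ξ 0 with hlt | heq | hgt
    · have hgne : g ξ ≠ -1 := by
        intro hcon
        exact hnm' ⟨by linarith, by rw [neg_neg]; exact hcon⟩
      have hg0 : g ξ = 0 := by
        rcases hv with h | h | h
        · exact absurd h hgne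
        · exact h
        · exfalso; have := hneg' hlt; rw [h] at this; norm_num at this
      rw [hg0, if_pos (lt_of_lt_of_le hlt ha0), if_pos hlt]; ring
    · exact absurd heq hξ0
    · have h0 : ¬ ξ < 0 := not_lt.mpr (le_of_lt hgt)
      rw [if_neg h0]
      by_cases hlta : ξ < a
      · have hm : ξ ∈ S1 := hmem.mpr ⟨hgt, hlta⟩
        rw [hm.2, if_pos hlta]; ring
      · have hne1 : g ξ ≠ 1 := fun hcon => hlta (hmem.mp ⟨hgt, hcon⟩).2
        have hg0 : g ξ = 0 := by
          rcases hv with h | h | h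
          · exfalso; have := hpos' hgt; rw [h] at this; norm_num at this
          · exact h
          · exact absurd h hne1
        rw [hg0, if_neg hlta]; ring
  · rcases eq_or_ne (volume S1) 0 with ha2 | ha2
    · -- no positive part : c = -b
      have ham : ∀ᵐ ξ : ℝ ∂volume, ξ ∉ S1 := measure_eq_zero_iff_ae_notMem.mp ha2
      apply hfinish (-b)
      filter_upwards [hzero, hpos, hneg, h1, hS2memNeg, ham, hne (-b)] with
        ξ hξ0 hpos' hneg' hv hmem ham' hneb
      rcases lt_trichotomy ξ 0 with hlt | heq | hgt
      · rw [if_pos hlt]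
        by_cases hltb : ξ < -b
        · have hgne : g ξ ≠ -1 := by
            intro hcon
            have hm : -ξ ∈ S2 := ⟨by linarith, by rw [neg_neg]; exact hcon⟩
            have := (hmem.mp hm).2
            linarith
          have hg0 : g ξ = 0 := by
            rcases hv with h | h | h
            · exact absurd h hgne
            · exact h
            · exfalso; have := hneg' hlt; rw [h] at this; norm_num at this
          rw [hg0, if_pos hltb]; ring
        · have hgtb : -b < ξ := lt_of_le_of_ne (not_lt.mp hltb) (Ne.symm hneb)
          have hm : -ξ ∈ S2 := hmem.mpr ⟨by linarith, by linarith⟩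
          have hgm1 : g ξ = -1 := by have := hm.2; rwa [neg_neg] at this
          rw [hgm1, if_neg (not_lt.mpr (le_of_lt hgtb))]; ring
      · exact absurd heq hξ0
      · have hne1 : g ξ ≠ 1 := fun hcon => ham' ⟨hgt, hcon⟩
        have hg0 : g ξ = 0 := by
          rcases hv with h | h | h
          · exfalso; have := hpos' hgt; rw [h] at this; norm_num at this
          · exact h
          · exact absurd h hne1
        rw [hg0, if_neg (not_lt.mpr (by linarith : -b ≤ ξ)),
          if_neg (not_lt.mpr (le_of_lt hgt))]; ring
    · -- both parts nonempty : contradiction with the jump condition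
      exfalso
      have hapos : 0 < a := ENNReal.toReal_pos ha2 hfin1
      have hbpos : 0 < b := ENNReal.toReal_pos hb2 hfin2
      have P1 : ∀ᵐ ξ : ℝ ∂volume, ξ ∈ Set.Ioo 0 a → g ξ = 1 := by
        filter_upwards [hS1mem] with ξ hmem hx
        exact (hmem.mpr hx).2
      have P2 : ∀ᵐ ξ : ℝ ∂volume, ξ ∈ Set.Ioo (-b) 0 → g ξ = -1 := by
        filter_upwards [hS2memNeg] with ξ hmem hx
        have hmx : -ξ ∈ Set.Ioo 0 b := ⟨by linarith [hx.2], by linarith [hx.1]⟩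
        have hm := (hmem.mpr hmx).2
        rwa [neg_neg] at hm
      have G1 := qs.ae P1
      have G2 := qf.ae P2
      have hcontra : ∀ᵐ p : ℝ × ℝ ∂((volume : Measure ℝ).prod volume),
          p ∉ (Set.Ioo (-b) 0) ×ˢ (Set.Ioo 0 a) := by
        filter_upwards [h4, G1, G2] with p hp hg1 hg2 hmemp
        have e1 : g p.2 = 1 := hg1 hmemp.2
        have e2 : g p.1 = -1 := hg2 hmemp.1
        have := hp (lt_trans hmemp.1.2 hmemp.2.1)
        rw [e1, e2] at this; norm_num at this
      have hz := measure_eq_zero_iff_ae_notMem.mpr hcontra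
      rw [Measure.prod_prod, Real.volume_Ioo, Real.volume_Ioo] at hz
      rcases mul_eq_zero.mp hz with h | h
      · rw [ENNReal.ofReal_eq_zero] at h; linarith
      · rw [ENNReal.ofReal_eq_zero] at h; linarith


theorem kinetic_reconstruction
    {X : Type*} [MeasurableSpace X] (μ : Measure X) [SigmaFinite μ]
    (R : ℝ) (hR : 0 < R)
    (f : X × ℝ → ℝ) (hfmeas : Measurable f)
    (hvals : ∀ᵐ p ∂(μ.prod (volume : Measure ℝ)), f p = -1 ∨ f p = 0 ∨ f p = 1)
    (hsupp : ∀ᵐ p ∂(μ.prod (volume : Measure ℝ)), R < |p.2| → f p = 0)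
    (hmono : ∀ᵐ q ∂(μ.prod (volume : Measure (ℝ × ℝ))),
      (q.2.1 < q.2.2 ∧ q.2.2 < 0) ∨ (0 < q.2.1 ∧ q.2.1 < q.2.2) →
        f (q.1, q.2.2) ≤ f (q.1, q.2.1))
    (hjump : ∀ᵐ q ∂(μ.prod (volume : Measure (ℝ × ℝ))),
      q.2.1 < q.2.2 → 0 ≤ f (q.1, q.2.1) - f (q.1, q.2.2) + 1) :
    Measurable (fun x => ∫ ξ : ℝ, f (x, ξ)) ∧
    ∀ᵐ x ∂μ, ∀ᵐ ξ : ℝ ∂(volume : Measure ℝ),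
      f (x, ξ) = (if ξ < ∫ η : ℝ, f (x, η) then (1 : ℝ) else 0) - (if ξ < 0 then 1 else 0) := by
  constructor
  · exact (hfmeas.stronglyMeasurable.integral_prod_right').measurable
  · have H1 := Measure.ae_ae_of_ae_prod hvals
    have H2 := Measure.ae_ae_of_ae_prod hsupp
    have H3 := Measure.ae_ae_of_ae_prod hmono
    have H4 := Measure.ae_ae_of_ae_prod hjump
    filter_upwards [H1, H2, H3, H4] with x hx1 hx2 hx3 hx4
    exact oneD R hR (fun ξ => f (x, ξ)) (hfmeas.comp measurable_prodMk_left) hx1 hx2 hx3 hx4
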